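/- Let n ≥ 3 and let π ∈ S_n be a permutation such that π avoids both the pattern 231 and the pattern 1432 and π² avoids the pattern 231. Then at least one of the following holds: π(1) = n, or π(n) = n, or (π(n−1) = n and π(n) = n−1). -/

import Mathlib

/-- `π` contains the (classical) pattern `σ`: there is a strictly increasing
sequence of positions on which `π` is order isomorphic to `σ`. -/
def ContainsPat {n k : ℕ} (π : Equiv.Perm (Fin n)) (σ : Equiv.Perm (Fin k)) : Prop :=
  ∃ f : Fin k → Fin n, StrictMono f ∧ ∀ a b : Fin k, σ a < σ b ↔ π (f a) < π (f b)

/-- `π` avoids the pattern `σ`. -/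
def AvoidsPat {n k : ℕ} (π : Equiv.Perm (Fin n)) (σ : Equiv.Perm (Fin k)) : Prop :=
  ¬ ContainsPat π σ

/-- `π` contains the consecutive pattern `σ`: some `k` consecutive positions of `π`
carry values order isomorphic to `σ`. -/
def ContainsConsecPat {n k : ℕ} (π : Equiv.Perm (Fin n)) (σ : Equiv.Perm (Fin k)) : Prop :=
  ∃ (i : ℕ) (h : i + k ≤ n), ∀ a b : Fin k,
    σ a < σ b ↔ π ⟨i + a.val, by have := a.isLt; omega⟩ < π ⟨i + b.val, by have := b.isLt; omega⟩

/-- `π` avoids the consecutive pattern `σ`. -/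
def AvoidsConsecPat {n k : ℕ} (π : Equiv.Perm (Fin n)) (σ : Equiv.Perm (Fin k)) : Prop :=
  ¬ ContainsConsecPat π σ

/-- the pattern 231 (0-indexed: 0 ↦ 1, 1 ↦ 2, 2 ↦ 0) -/
def p231 : Equiv.Perm (Fin 3) := c[0, 1, 2]

/-- the pattern 312 (0-indexed: 0 ↦ 2, 1 ↦ 0, 2 ↦ 1) -/
def p312 : Equiv.Perm (Fin 3) := c[0, 2, 1]

/-- the pattern 213 (0-indexed: 0 ↦ 1, 1 ↦ 0, 2 ↦ 2) -/
def p213 : Equiv.Perm (Fin 3) := c[0, 1]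

/-- the pattern 1432 (0-indexed: 0 ↦ 0, 1 ↦ 3, 2 ↦ 2, 3 ↦ 1) -/
def p1432 : Equiv.Perm (Fin 4) := c[1, 3]

/-- direct sum of two permutations -/
def dsum {k m : ℕ} (σ : Equiv.Perm (Fin k)) (τ : Equiv.Perm (Fin m)) :
    Equiv.Perm (Fin (k + m)) :=
  finSumFinEquiv.symm.trans ((Equiv.sumCongr σ τ).trans finSumFinEquiv)

/-- the Lucas numbers: L₁ = 1, L₂ = 3, L_m = L_{m-1} + L_{m-2} -/
def lucas : ℕ → ℕ
  | 0 => 2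
  | 1 => 1
  | n + 2 => lucas (n + 1) + lucas n

/-- if n ≥ 3 and π ∈ S_n avoids 231 and 1432 and π² avoids 231, then
π(1) = n, or π(n) = n, or (π(n−1) = n and π(n) = n−1) (stated 0-indexed). -/
lemma sm3 {n : ℕ} (a b c : Fin n) (h1 : a < b) (h2 : b < c) : StrictMono ![a, b, c] := by
  intro x y hxy
  fin_cases x <;> fin_cases y <;> simp_all <;>
    first
      | exact h1
      | exact h2
      | exact h1.trans h2

lemma sm4 {n : ℕ} (a b c d : Fin n) (h1 : a < b) (h2 : b < c) (h3 : c < d) :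
    StrictMono ![a, b, c, d] := by
  intro x y hxy
  fin_cases x <;> fin_cases y <;> simp_all <;>
    first
      | exact h1
      | exact h2
      | exact h3
      | exact h1.trans h2
      | exact h2.trans h3
      | exact (h1.trans h2).trans h3

lemma pat231 {n : ℕ} (π : Equiv.Perm (Fin n)) (a b c : Fin n) (hab : π a < π b)
    (hcb : π c < π b) (hca : π c < π a) :
    ∀ x y : Fin 3, p231 x < p231 y ↔ π (![a,b,c] x) < π (![a,b,c] y) := by
  intro x y
  fin_cases x <;> fin_cases y <;> simp only [Matrix.cons_val_zero, Matrix.cons_val_one,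
      Matrix.head_cons, Matrix.cons_val_two, Matrix.tail_cons, Fin.mk_one, Fin.mk_zero] <;>
    first
      | (refine iff_of_true (by decide) ?_; assumption)
      | (refine iff_of_false (by decide) ?_;
          first
            | exact lt_irrefl _
            | exact lt_asymm (by assumption))

lemma pat1432 {n : ℕ} (π : Equiv.Perm (Fin n)) (e b c d : Fin n) (hed : π e < π d)
    (hec : π e < π c) (heb : π e < π b) (hcb : π c < π b) (hdb : π d < π b) (hdc : π d < π c) :
    ∀ x y : Fin 4, p1432 x < p1432 y ↔ π (![e,b,c,d] x) < π (![e,b,c,d] y) := by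
  intro x y
  fin_cases x <;> fin_cases y <;> simp only [Matrix.cons_val_zero, Matrix.cons_val_one,
      Matrix.head_cons, Matrix.cons_val_two, Matrix.tail_cons, Matrix.cons_val_three,
      Fin.mk_one, Fin.mk_zero] <;>
    first
      | (refine iff_of_true (by decide) ?_; assumption)
      | (refine iff_of_false (by decide) ?_;
          first
            | exact lt_irrefl _
            | exact lt_asymm (by assumption))

set_option maxHeartbeats 1000000 in
theorem stmt2 (n : ℕ) (hn : 3 ≤ n) (π : Equiv.Perm (Fin n))
    (h1 : AvoidsPat π p231) (h2 : AvoidsPat π p1432) (h3 : AvoidsPat (π ^ 2) p231) :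
    π ⟨0, by omega⟩ = ⟨n - 1, by omega⟩ ∨
    π ⟨n - 1, by omega⟩ = ⟨n - 1, by omega⟩ ∨
    (π ⟨n - 2, by omega⟩ = ⟨n - 1, by omega⟩ ∧ π ⟨n - 1, by omega⟩ = ⟨n - 2, by omega⟩) := by
  obtain ⟨j, hπj⟩ : ∃ j : Fin n, π j = ⟨n - 1, by omega⟩ :=
    ⟨π.symm ⟨n - 1, by omega⟩, Equiv.apply_symm_apply π _⟩
  -- any other position has value < n - 1
  have htop : ∀ x : Fin n, x ≠ j → (π x).val < n - 1 := by
    intro x hx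
    have hlt : (π x).val < n := (π x).isLt
    have hne : (π x).val ≠ n - 1 := by
      intro h
      apply hx
      apply π.injective
      rw [hπj]
      exact Fin.ext h
    omega
  by_cases hj0 : j.val = 0
  · left
    have hje : (⟨0, by omega⟩ : Fin n) = j := Fin.ext hj0.symm
    rw [hje]
    exact hπj
  by_cases hjtop : j.val = n - 1
  · right; left
    have hje : (⟨n - 1, by omega⟩ : Fin n) = j := Fin.ext hjtop.symm
    have hpe : π (⟨n - 1, by omega⟩ : Fin n) = π j := by rw [hje]
    rw [hpe]
    exact hπj
  -- now 1 ≤ j ≤ n - 2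
  have hjle : j.val ≤ n - 2 := by have := j.isLt; omega
  have hj1 : 1 ≤ j.val := by omega
  -- Lemma A: from 231-avoidance, values before j are smaller than values after j
  have hA : ∀ a c : Fin n, a < j → j < c → π a < π c := by
    intro a c haj hjc
    by_contra hcon
    have hne : π c ≠ π a := fun h => (ne_of_lt (lt_trans haj hjc)) (π.injective h).symm
    have hca : π c < π a := lt_of_le_of_ne (not_lt.mp hcon) hne
    have haJ : π a < π j := by
      rw [hπj]; exact htop a (ne_of_lt haj)
    have hcJ : π c < π j := by
      rw [hπj]; exact htop c (ne_of_gt hjc)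
    exact h1 ⟨![a, j, c], sm3 a j c haj hjc, pat231 π a j c haJ hcJ hca⟩
  -- Lemma B: values after j are ≥ j
  have hB : ∀ c : Fin n, j < c → j.val ≤ (π c).val := by
    intro c hc
    have hcard : (Finset.Iio j).card ≤ (Finset.Iio (π c)).card := by
      apply Finset.card_le_card_of_injOn (fun a => π a)
      · intro a ha
        simp only [Finset.mem_coe, Finset.mem_Iio] at *
        exact hA a c ha hc
      · exact π.injective.injOn
    rwa [Fin.card_Iio, Fin.card_Iio] at hcard
  -- Lemma C: suffix strictly increasing (from 1432-avoidance)
  have hC : ∀ c d : Fin n, j < c → c < d → π c < π d := by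
    intro c d hjc hcd
    by_contra hcon
    have hne : π d ≠ π c := fun h => (ne_of_lt hcd) (π.injective h).symm
    have hdc : π d < π c := lt_of_le_of_ne (not_lt.mp hcon) hne
    have h0j : (⟨0, by omega⟩ : Fin n) < j := by
      simp only [Fin.lt_def, Fin.val_mk]; omega
    have h0d : π ⟨0, by omega⟩ < π d := hA _ d h0j (hjc.trans hcd)
    have h0c : π ⟨0, by omega⟩ < π c := hA _ c h0j hjc
    have hcJ : π c < π j := by
      rw [hπj]; exact htop c (ne_of_gt hjc)
    have hdJ : π d < π j := by
      rw [hπj]; exact htop d (ne_of_gt (hjc.trans hcd))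
    have h0J : π ⟨0, by omega⟩ < π j := h0c.trans hcJ
    exact h2 ⟨![⟨0, by omega⟩, j, c, d], sm4 _ j c d h0j hjc hcd,
      pat1432 π _ j c d h0d h0c h0J hcJ hdJ hdc⟩
  -- iterated steps of Lemma C
  have hstep : ∀ k : ℕ, ∀ c : Fin n, j < c → ∀ _hck : c.val + k ≤ n - 1,
      (π c).val + k ≤ (π ⟨c.val + k, by omega⟩).val := by
    intro k
    induction k with
    | zero => intro c hc _; simp
    | succ m ih =>
      intro c hc hck
      have h1' := ih c hc (by omega)
      have hjm : j < (⟨c.val + m, by omega⟩ : Fin n) := by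
        have hh := Fin.lt_def.mp hc
        simp only [Fin.lt_def, Fin.val_mk]
        omega
      have hlt : (⟨c.val + m, by omega⟩ : Fin n) < (⟨c.val + m + 1, by omega⟩ : Fin n) := by
        simp only [Fin.lt_def, Fin.val_mk]; omega
      have h2' := hC _ _ hjm hlt
      rw [Fin.lt_def] at h2'
      show (π c).val + (m + 1) ≤ (π ⟨c.val + m + 1, by omega⟩).val
      omega
  -- key: π c = c - 1 for all c > j
  have hkey : ∀ c : Fin n, j < c → (π c).val = c.val - 1 := by
    intro c hc
    have hcI : c.val < n := c.isLt
    have hjc : j.val < c.val := hc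
    have hup : (π c).val + (n - 1 - c.val) ≤ (π ⟨c.val + (n - 1 - c.val), by omega⟩).val :=
      hstep (n - 1 - c.val) c hc (by omega)
    have he : (⟨c.val + (n - 1 - c.val), by omega⟩ : Fin n) = ⟨n - 1, by omega⟩ :=
      Fin.ext (by simp only [Fin.val_mk]; omega)
    have hup2 := congrArg (fun x => (π x).val) he
    have htopn : (π ⟨n - 1, by omega⟩).val < n - 1 :=
      htop _ (fun h => hjtop (by rw [← h]))
    have hj1lt : j < (⟨j.val + 1, by omega⟩ : Fin n) := by simp only [Fin.lt_def, Fin.val_mk]; omega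
    have hlow1 : j.val ≤ (π ⟨j.val + 1, by omega⟩).val := hB _ hj1lt
    have hlow : (π ⟨j.val + 1, by omega⟩).val + (c.val - j.val - 1) ≤
        (π ⟨j.val + 1 + (c.val - j.val - 1), by omega⟩).val :=
      hstep (c.val - j.val - 1) ⟨j.val + 1, by omega⟩ hj1lt (by simp only [Fin.val_mk]; omega)
    have he2 : (⟨j.val + 1 + (c.val - j.val - 1), by omega⟩ : Fin n) = c :=
      Fin.ext (by simp only [Fin.val_mk]; omega)
    have hlow2 := congrArg (fun x => (π x).val) he2
    omega
  by_cases hjn2 : j.val = n - 2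
  · right; right
    constructor
    · have hje : (⟨n - 2, by omega⟩ : Fin n) = j := Fin.ext hjn2.symm
      rw [hje]
      exact hπj
    · have hlt : j < (⟨n - 1, by omega⟩ : Fin n) := by simp only [Fin.lt_def, Fin.val_mk]; omega
      have hk := hkey _ hlt
      apply Fin.ext
      simp only at hk ⊢
      omega
  -- now 1 ≤ j ≤ n - 3: contradiction via π²
  exfalso
  have hjn3 : j.val ≤ n - 3 := by omega
  have hsq : ∀ x : Fin n, (π ^ 2) x = π (π x) := by
    intro x; rw [pow_two]; rfl
  have hv1 : ((π ^ 2) j).val = n - 2 := by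
    rw [hsq, hπj]
    exact hkey ⟨n - 1, by omega⟩ (by simp only [Fin.lt_def, Fin.val_mk]; omega)
  have hv2 : ((π ^ 2) ⟨j.val + 1, by omega⟩).val = n - 1 := by
    rw [hsq]
    have h1' : (π ⟨j.val + 1, by omega⟩).val = j.val := by
      rw [hkey _ (by simp only [Fin.lt_def, Fin.val_mk]; omega : j < _)]
      simp
    have he : π ⟨j.val + 1, by omega⟩ = j := Fin.ext h1'
    rw [he, hπj]
  have hv3 : ((π ^ 2) ⟨n - 1, by omega⟩).val = n - 3 := by
    rw [hsq]
    have h1' : (π ⟨n - 1, by omega⟩).val = n - 2 := by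
      rw [hkey _ (by simp only [Fin.lt_def, Fin.val_mk]; omega : j < _)]
      simp
      omega
    have he : π ⟨n - 1, by omega⟩ = ⟨n - 2, by omega⟩ := Fin.ext h1'
    rw [he]
    have hk := hkey ⟨n - 2, by omega⟩ (by simp only [Fin.lt_def, Fin.val_mk]; omega)
    simp only at hk ⊢
    omega
  have hab : (π ^ 2) j < (π ^ 2) ⟨j.val + 1, by omega⟩ := by
    simp only [Fin.lt_def, Fin.val_mk]; omega
  have hcb : (π ^ 2) ⟨n - 1, by omega⟩ < (π ^ 2) ⟨j.val + 1, by omega⟩ := by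
    simp only [Fin.lt_def, Fin.val_mk]; omega
  have hca : (π ^ 2) ⟨n - 1, by omega⟩ < (π ^ 2) j := by
    simp only [Fin.lt_def, Fin.val_mk]; omega
  exact h3 ⟨![j, ⟨j.val + 1, by omega⟩, ⟨n - 1, by omega⟩],
    sm3 _ _ _ (by simp only [Fin.lt_def, Fin.val_mk]; omega) (by simp only [Fin.lt_def, Fin.val_mk]; omega),
    pat231 (π ^ 2) _ _ _ hab hcb hca⟩
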